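/- Let G=(V,E) be a graph and let 𝒫_R and 𝒫_B be two partitions of V such that (G, 𝒫_B ∪ 𝒫_R) is c-connected. If a planar embedding of G is c-planar for 𝒫_B ∪ 𝒫_R, then the same embedding is c-planar for the connected intersection partition 𝒫'_I of 𝒫_B and 𝒫_R; in particular, if (G, 𝒫_B ∪ 𝒫_R) is c-planar then (G, 𝒫'_I) is c-planar. -/

import Mathlib

/-!
Formalization of statements from
"Clustered Planarity of Overlapping Clusters" (arXiv:1609.04606).

Planarity is modeled topologically: a drawing assigns to each vertex a point of the
plane `ℝ × ℝ` and to each edge a simple arc, such that arcs meet only in common end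
vertices.  The outer face of (a part of) a drawing is the set of points lying in an
unbounded connected component of the complement.
-/

open scoped Classical

noncomputable section

namespace ClusteredPlanarity

/-- The plane. -/
abbrev Plane := ℝ × ℝ

/-- A drawing of a graph in the plane: a point for every vertex and a curve for every
(directed) edge. -/
structure Drawing {V : Type*} (G : SimpleGraph V) where
  pos : V → Plane
  curve : ∀ {u v : V}, G.Adj u v → Path (pos u) (pos v)

variable {V : Type*} {G : SimpleGraph V}

/-- A drawing is planar (i.e., is a planar embedding) if distinct vertices get distinct
points, every edge is a simple arc meeting the vertex points only in its end vertices,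
the two orientations of an edge are drawn by the same arc, and two distinct edges meet
only in common end vertices. -/
structure Drawing.IsPlanar (D : Drawing G) : Prop where
  pos_injective : Function.Injective D.pos
  curve_symm : ∀ {u v : V} (h : G.Adj u v), D.curve h.symm = (D.curve h).symm
  curve_injective : ∀ {u v : V} (h : G.Adj u v), Function.Injective (D.curve h)
  curve_vertex : ∀ {u v : V} (h : G.Adj u v) (w : V),
    D.pos w ∈ Set.range (D.curve h) → w = u ∨ w = v
  curve_disjoint : ∀ {u v u' v' : V} (h : G.Adj u v) (h' : G.Adj u' v'),
    s(u, v) ≠ s(u', v') → ∀ x ∈ Set.range (D.curve h), x ∈ Set.range (D.curve h') →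
      x ∈ D.pos '' ({u, v} ∩ {u', v'} : Set V)

/-- The part of the plane occupied by the drawing of the subgraph induced by `C`. -/
def Drawing.image (D : Drawing G) (C : Set V) : Set Plane :=
  D.pos '' C ∪ ⋃ (u : V) (v : V) (_ : u ∈ C) (_ : v ∈ C) (h : G.Adj u v),
    Set.range (D.curve h)

/-- The outer face (outer region) determined by a set `K` in the plane: all points lying in
an unbounded connected component of the complement of `K`. -/
def outerRegion (K : Set Plane) : Set Plane :=
  {x | x ∉ K ∧ ¬ Bornology.IsBounded (connectedComponentIn Kᶜ x)}

/-- A drawing of `G` is a c-planar embedding for the set of clusters `𝒞` if it is a planar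
embedding such that, for every cluster `C`, all vertices not in `C` lie in the outer face of
the induced drawing of `G[C]`. -/
def Drawing.IsCPlanarFor (D : Drawing G) (𝒞 : Set (Set V)) : Prop :=
  D.IsPlanar ∧ ∀ C ∈ 𝒞, ∀ v : V, v ∉ C → D.pos v ∈ outerRegion (D.image C)

/-- A clustered graph `(G, 𝒞)` is c-connected if every cluster induces a connected
subgraph. -/
def CConnected (G : SimpleGraph V) (𝒞 : Set (Set V)) : Prop :=
  ∀ C ∈ 𝒞, (G.induce C).Connected

/-- A clustered graph `(G, 𝒞)` is c-co-connected if every cluster and the complement of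
every cluster induce connected subgraphs. -/
def CCoConnected (G : SimpleGraph V) (𝒞 : Set (Set V)) : Prop :=
  ∀ C ∈ 𝒞, (G.induce C).Connected ∧ (G.induce Cᶜ).Connected

/-- A clustered graph is c-planar iff it has a c-planar support: a supergraph on the same
vertex set in which all clusters are connected, together with a c-planar embedding. -/
def IsCPlanar (G : SimpleGraph V) (𝒞 : Set (Set V)) : Prop :=
  ∃ G' : SimpleGraph V, G ≤ G' ∧ CConnected G' 𝒞 ∧ ∃ D : Drawing G', D.IsCPlanarFor 𝒞

/-- Reachability inside a set `A` of vertices. -/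
def ReachIn (G : SimpleGraph V) (A : Set V) (u v : V) : Prop :=
  ∃ (hu : u ∈ A) (hv : v ∈ A), (G.induce A).Reachable ⟨u, hu⟩ ⟨v, hv⟩

/-- The connected intersection partition of two partitions `PB` and `PR`: the parts are the
vertex sets of the connected components of the graphs `G[B ∩ R]`, `B ∈ PB`, `R ∈ PR`. -/
def connectedIntersectionPartition (G : SimpleGraph V) (PB PR : Set (Set V)) :
    Set (Set V) :=
  {S | ∃ B ∈ PB, ∃ R ∈ PR, ∃ v ∈ B ∩ R, S = {w | ReachIn G (B ∩ R) w v}}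

/-- A graph is 2-connected if it has more than two vertices and no cut vertex. -/
def TwoConnected (G : SimpleGraph V) : Prop :=
  G.Connected ∧ 2 < Nat.card V ∧ ∀ v : V, (G.induce ({v}ᶜ : Set V)).Connected

/-- A graph is 3-connected if it has more than three vertices and no separation pair. -/
def ThreeConnected (G : SimpleGraph V) : Prop :=
  G.Connected ∧ 3 < Nat.card V ∧ ∀ s t : V, (G.induce ({s, t}ᶜ : Set V)).Connected



section Aux

variable {G' : SimpleGraph V}

/-- Monotonicity of the drawn image. -/
lemma Drawing.image_mono (D : Drawing G') {S T : Set V} (hST : S ⊆ T) :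
    D.image S ⊆ D.image T := by
  intro x hx
  rcases hx with hx | hx
  · exact Or.inl (Set.image_mono hST hx)
  · simp only [Set.mem_iUnion] at hx ⊢
    obtain ⟨u, v, hu, hv, h, hx⟩ := hx
    exact Or.inr (by simp only [Set.mem_iUnion]; exact ⟨u, v, hST hu, hST hv, h, hx⟩)

/-- A vertex not in `S` is not drawn on the image of `S`. -/
lemma pos_not_mem_image {D : Drawing G'} (hpl : D.IsPlanar) {S : Set V} {v : V}
    (hv : v ∉ S) : D.pos v ∉ D.image S := by
  rintro (⟨s, hs, hsv⟩ | hx)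
  · exact hv (hpl.pos_injective hsv ▸ hs)
  · simp only [Set.mem_iUnion] at hx
    obtain ⟨u, w, hu, hw, h, hx⟩ := hx
    rcases hpl.curve_vertex h v hx with rfl | rfl
    · exact hv hu
    · exact hv hw

/-- The curve of an edge with both endpoints outside `S` avoids the image of `S`. -/
lemma curve_not_mem_image {D : Drawing G'} (hpl : D.IsPlanar) {S : Set V} {a b : V}
    (h : G'.Adj a b) (ha : a ∉ S) (hb : b ∉ S) {x : Plane}
    (hx : x ∈ Set.range (D.curve h)) : x ∉ D.image S := by
  rintro (⟨s, hs, hsx⟩ | hmem)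
  · rcases hpl.curve_vertex h s (hsx ▸ hx) with rfl | rfl
    · exact ha hs
    · exact hb hs
  · simp only [Set.mem_iUnion] at hmem
    obtain ⟨u, w, hu, hw, h', hx'⟩ := hmem
    have hne : s(a, b) ≠ s(u, w) := by
      intro he
      rw [Sym2.eq_iff] at he
      rcases he with ⟨rfl, rfl⟩ | ⟨rfl, rfl⟩
      · exact ha hu
      · exact ha hw
    have := hpl.curve_disjoint h h' hne x hx hx'
    obtain ⟨c, ⟨hc1, hc2⟩, -⟩ := this
    rcases hc1 with rfl | rfl
    · rcases hc2 with rfl | rfl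
      · exact ha hu
      · exact ha hw
    · rcases hc2 with rfl | rfl
      · exact hb hu
      · exact hb hw

/-- `JoinedIn` implies membership in the connected component within the set. -/
lemma joinedIn_mem_connectedComponentIn {x y : Plane} {F : Set Plane}
    (h : JoinedIn F x y) : y ∈ connectedComponentIn F x := by
  obtain ⟨γ, hγ⟩ := h
  have hconn : IsPreconnected (Set.range γ) :=
    (isConnected_range γ.continuous).isPreconnected
  have hsub : Set.range γ ⊆ F := by rintro z ⟨t, rfl⟩; exact hγ t
  exact hconn.subset_connectedComponentIn ⟨0, γ.source⟩ hsub ⟨1, γ.target⟩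

/-- Key walk lemma: a walk in `G[R]` from a vertex outside the component `S` of
`G[B ∩ R]` ending inside `S` passes through a vertex `w ∉ B` while staying outside
the image of `S` up to `w`. -/
lemma walk_escape {G : SimpleGraph V} (hle : G ≤ G') (D : Drawing G') (hpl : D.IsPlanar)
    {B R : Set V} {v₀ : V} :
    ∀ {x y : ↥R} (_ : (G.induce R).Walk x y),
      (↑y : V) ∈ {w | ReachIn G (B ∩ R) w v₀} → (↑x : V) ∉ {w | ReachIn G (B ∩ R) w v₀} →
      ∃ w : V, w ∉ B ∧
        JoinedIn (D.image {w | ReachIn G (B ∩ R) w v₀})ᶜ (D.pos ↑x) (D.pos w) := by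
  intro x y p
  induction p with
  | nil => intro hy hx; exact absurd hy hx
  | @cons x c y h p ih =>
    intro hy hx
    by_cases hcS : (↑c : V) ∈ {w | ReachIn G (B ∩ R) w v₀}
    · -- the next vertex is in S; then x ∉ B
      refine ⟨↑x, ?_, JoinedIn.refl (pos_not_mem_image hpl hx)⟩
      intro hxB
      apply hx
      obtain ⟨hc1, hc2, hr⟩ := hcS
      have hadj : (G.induce (B ∩ R)).Adj ⟨↑x, ⟨hxB, x.2⟩⟩ ⟨↑c, hc1⟩ := h
      exact ⟨⟨hxB, x.2⟩, hc2, hadj.reachable.trans hr⟩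
    · obtain ⟨w, hwB, J⟩ := ih hy hcS
      have h' : G'.Adj ↑x ↑c := hle h
      have J0 : JoinedIn (D.image {w | ReachIn G (B ∩ R) w v₀})ᶜ (D.pos ↑x) (D.pos ↑c) :=
        ⟨D.curve h', fun t => curve_not_mem_image hpl h' hx hcS ⟨t, rfl⟩⟩
      exact ⟨w, hwB, J0.trans J⟩

/-- The main lemma: a drawing of a supergraph `G'` of `G` that is c-planar for
`PB ∪ PR` is c-planar for the connected intersection partition of `G`. -/
lemma cplanar_for_cip {G : SimpleGraph V} (hle : G ≤ G') {PB PR : Set (Set V)}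
    (hcc : CConnected G (PB ∪ PR)) (D : Drawing G') (hD : D.IsCPlanarFor (PB ∪ PR)) :
    D.IsCPlanarFor (connectedIntersectionPartition G PB PR) := by
  obtain ⟨hpl, hout⟩ := hD
  refine ⟨hpl, ?_⟩
  rintro S ⟨B, hB, R, hR, v₀, hv₀, rfl⟩ v hv
  set S : Set V := {w | ReachIn G (B ∩ R) w v₀} with hSdef
  have hSsub : S ⊆ B ∩ R := fun w hw => hw.1
  have hSB : D.image S ⊆ D.image B := D.image_mono (fun w hw => (hSsub hw).1)
  have hSR : D.image S ⊆ D.image R := D.image_mono (fun w hw => (hSsub hw).2)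
  by_cases hvB : v ∈ B
  · by_cases hvR : v ∈ R
    · -- hard case: v ∈ B ∩ R but in a different component
      have hv₀S : v₀ ∈ S := ⟨hv₀, hv₀, SimpleGraph.Reachable.refl _⟩
      have hRc : (G.induce R).Connected := hcc R (Or.inr hR)
      have hreach := hRc.preconnected ⟨v, hvR⟩ ⟨v₀, hv₀.2⟩
      obtain ⟨w, hwB, J⟩ := walk_escape hle D hpl hreach.some hv₀S hv
      have houtw := hout B (Or.inl hB) w hwB
      have hwmem : D.pos w ∈ connectedComponentIn (D.image S)ᶜ (D.pos v) :=
        joinedIn_mem_connectedComponentIn J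
      refine ⟨pos_not_mem_image hpl hv, ?_⟩
      rw [connectedComponentIn_eq hwmem]
      intro hbdd
      exact houtw.2 (hbdd.subset
        (connectedComponentIn_mono _ (Set.compl_subset_compl.2 hSB)))
    · have houtv := hout R (Or.inr hR) v hvR
      refine ⟨fun hmem => houtv.1 (hSR hmem), ?_⟩
      intro hbdd
      exact houtv.2 (hbdd.subset
        (connectedComponentIn_mono _ (Set.compl_subset_compl.2 hSR)))
  · have houtv := hout B (Or.inl hB) v hvB
    refine ⟨fun hmem => houtv.1 (hSB hmem), ?_⟩
    intro hbdd
    exact houtv.2 (hbdd.subset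
      (connectedComponentIn_mono _ (Set.compl_subset_compl.2 hSB)))

/-- The vertex set of a connected component induces a connected subgraph. -/
lemma reachIn_component_connected {G : SimpleGraph V} {A : Set V} {v₀ : V}
    (hv₀ : v₀ ∈ A) : (G.induce {w | ReachIn G A w v₀}).Connected := by
  set S : Set V := {w | ReachIn G A w v₀} with hSdef
  have hv₀S : v₀ ∈ S := ⟨hv₀, hv₀, SimpleGraph.Reachable.refl _⟩
  have key : ∀ {x y : ↥A} (_ : (G.induce A).Walk x y), (↑y : V) = v₀ →
      ReachIn G S ↑x v₀ := by
    intro x y p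
    induction p with
    | nil => rintro rfl; exact ⟨hv₀S, hv₀S, SimpleGraph.Reachable.refl _⟩
    | @cons x c y h p ih =>
      intro hy
      obtain ⟨hcS, hv₀S', hr⟩ := ih hy
      have hxS : (↑x : V) ∈ S :=
        ⟨x.2, hv₀, hy ▸ (SimpleGraph.Walk.cons h p).reachable⟩
      have hadj : (G.induce S).Adj ⟨↑x, hxS⟩ ⟨↑c, hcS⟩ := h
      exact ⟨hxS, hv₀S', hadj.reachable.trans hr⟩
  have hreach : ∀ x : ↥S, (G.induce S).Reachable x ⟨v₀, hv₀S⟩ := by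
    rintro ⟨w, hwA, hv₀A, hr⟩
    obtain ⟨_, _, hr'⟩ := key hr.some rfl
    exact hr'
  have hne : Nonempty ↥S := ⟨⟨v₀, hv₀S⟩⟩
  exact ⟨fun x y => (hreach x).trans (hreach y).symm⟩

end Aux

/-- If `(G, PB ∪ PR)` is c-connected, then every planar embedding of `G`
that is c-planar for `PB ∪ PR` is also c-planar for the connected intersection partition
`PI'`; in particular, if `(G, PB ∪ PR)` is c-planar then `(G, PI')` is c-planar. -/
theorem cplanar_embedding_for_connected_intersection
    {V : Type} [Fintype V] (G : SimpleGraph V) (PR PB : Set (Set V))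
    (hPR : Setoid.IsPartition PR) (hPB : Setoid.IsPartition PB)
    (hcc : CConnected G (PB ∪ PR)) :
    (∀ D : Drawing G, D.IsCPlanarFor (PB ∪ PR) →
        D.IsCPlanarFor (connectedIntersectionPartition G PB PR)) ∧
      (IsCPlanar G (PB ∪ PR) →
        IsCPlanar G (connectedIntersectionPartition G PB PR)) := by
  constructor
  · intro D hD
    exact cplanar_for_cip le_rfl hcc D hD
  · rintro ⟨G', hle, hccG', D, hD⟩
    refine ⟨G', hle, ?_, D, cplanar_for_cip hle hcc D hD⟩
    rintro S ⟨B, hB, R, hR, v₀, hv₀, rfl⟩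
    exact (reachIn_component_connected hv₀).mono (fun {a b} hab => hle hab)

end ClusteredPlanarity
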